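/- Under the standing hypotheses, the six-tuple (R⋆_αG, R^α, R, R, τ, τ') is a Morita context; moreover τ is surjective if and only if there exists x ∈ R with t_α(x) = 1_R. -/

import Mathlib

universe u

/-- A groupoid in the algebraic sense of Lawson: a non-empty set `G` with a
partially defined binary operation (here modeled by a total operation `mul`
whose value is only constrained when it is defined, i.e. when `d g = r h`),
an inversion `inv`, and domain/range maps `d`, `r`. -/
structure AlgGroupoid (G : Type u) where
  mul : G → G → G
  inv : G → G
  d : G → G
  r : G → G
  mul_assoc' : ∀ g h l, d g = r h → d h = r l → mul (mul g h) l = mul g (mul h l)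
  mul_d : ∀ g, mul g (d g) = g
  r_mul : ∀ g, mul (r g) g = g
  inv_mul : ∀ g, mul (inv g) g = d g
  mul_inv : ∀ g, mul g (inv g) = r g
  d_mul : ∀ g h, d g = r h → d (mul g h) = d h
  r_mul' : ∀ g h, d g = r h → r (mul g h) = r g
  d_inv : ∀ g, d (inv g) = r g
  r_inv : ∀ g, r (inv g) = d g
  inv_inv : ∀ g, inv (inv g) = g
  d_d : ∀ g, d (d g) = d g
  r_d : ∀ g, r (d g) = d g
  d_r : ∀ g, d (r g) = r g
  r_r : ∀ g, r (r g) = r g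

/-- `e` is an identity element of the groupoid `𝔾`, i.e. an element of `G₀`. -/
def AlgGroupoid.isId {G : Type u} (𝔾 : AlgGroupoid G) (e : G) : Prop := 𝔾.d e = e

instance {G : Type u} [DecidableEq G] (𝔾 : AlgGroupoid G) (e : G) : Decidable (𝔾.isId e) :=
  inferInstanceAs (Decidable (𝔾.d e = e))

/-- `D` is a two-sided ideal of `E` (both being subsets of an ambient
non-unital ring `T`). -/
structure IsIdealIn {T : Type u} [NonUnitalRing T] (D E : Set T) : Prop where
  subset : D ⊆ E
  zero_mem : (0 : T) ∈ D
  add_mem : ∀ ⦃x y : T⦄, x ∈ D → y ∈ D → x + y ∈ D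
  neg_mem : ∀ ⦃x : T⦄, x ∈ D → -x ∈ D
  mul_mem_left : ∀ ⦃x y : T⦄, x ∈ E → y ∈ D → x * y ∈ D
  mul_mem_right : ∀ ⦃x y : T⦄, x ∈ D → y ∈ E → x * y ∈ D

/-- `u` is a (two-sided) multiplicative identity element of the subset `D`. -/
def IsIdentityElem {T : Type u} [NonUnitalRing T] (u : T) (D : Set T) : Prop :=
  u ∈ D ∧ ∀ x ∈ D, u * x = x ∧ x * u = x

/-- A partial action `α = ({D_g}, {α_g})` of a groupoid `𝔾` on the ring whose
carrier is the subset `R` of the ambient non-unital ring `T` (take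
`R = Set.univ` for a partial action on `T` itself).  For each `g`, `D (r g)`
is an ideal of `R`, `D g` is an ideal of `D (r g)` and `act g` restricts to a
ring isomorphism from `D (inv g)` onto `D g`; moreover `act e` is the identity
of `D e` for identities `e`, and for composable `g, h` the map `act (mul g h)`
extends `act g ∘ act h` (whose domain is `(act h)⁻¹ (D (inv g) ∩ D h)`). -/
structure PartialGroupoidAction {G : Type u} (𝔾 : AlgGroupoid G) (T : Type u)
    [NonUnitalRing T] (R : Set T) where
  D : G → Set T
  act : G → T → T
  ideal_r : ∀ g, IsIdealIn (D (𝔾.r g)) R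
  ideal : ∀ g, IsIdealIn (D g) (D (𝔾.r g))
  bijOn : ∀ g, Set.BijOn (act g) (D (𝔾.inv g)) (D g)
  map_add : ∀ g, ∀ x ∈ D (𝔾.inv g), ∀ y ∈ D (𝔾.inv g), act g (x + y) = act g x + act g y
  map_mul : ∀ g, ∀ x ∈ D (𝔾.inv g), ∀ y ∈ D (𝔾.inv g), act g (x * y) = act g x * act g y
  act_id : ∀ e, 𝔾.isId e → ∀ x ∈ D e, act e x = x
  dom_cond : ∀ g h, 𝔾.d g = 𝔾.r h → ∀ x ∈ D (𝔾.inv h), act h x ∈ D (𝔾.inv g) →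
    x ∈ D (𝔾.inv (𝔾.mul g h))
  comp_cond : ∀ g h, 𝔾.d g = 𝔾.r h → ∀ x ∈ D (𝔾.inv h), act h x ∈ D (𝔾.inv g) →
    act g (act h x) = act (𝔾.mul g h) x

/-- The partial action `α` is global if, for all composable `g, h`, the
composite `α_g ∘ α_h` (taken on its largest possible domain) coincides with
`α_{gh}`; since both maps always agree on the domain of the composite, this
amounts to the equality of the two domains. -/
def PartialGroupoidAction.IsGlobal {G : Type u} {𝔾 : AlgGroupoid G} {T : Type u}
    [NonUnitalRing T] {R : Set T} (α : PartialGroupoidAction 𝔾 T R) : Prop :=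
  ∀ g h, 𝔾.d g = 𝔾.r h →
    {x | x ∈ α.D (𝔾.inv h) ∧ α.act h x ∈ α.D (𝔾.inv g)} = α.D (𝔾.inv (𝔾.mul g h))

/-- The subring `R^α` of invariants of `R` under the partial action `α`,
where `one g` denotes the identity element `1_g` of the ideal `D_g`. -/
def invariants {G : Type u} (𝔾 : AlgGroupoid G) {R : Type u} [Ring R]
    (α : PartialGroupoidAction 𝔾 R (Set.univ : Set R)) (one : G → R) : Set R :=
  {x : R | ∀ g : G, α.act g (x * one (𝔾.inv g)) = x * one g}

/-- The trace map `t_α : R → R`, `t_α(x) = ∑_{g ∈ G} α_g(x 1_{g⁻¹})`. -/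
def traceMap {G : Type u} [Fintype G] (𝔾 : AlgGroupoid G) {R : Type u} [Ring R]
    (α : PartialGroupoidAction 𝔾 R (Set.univ : Set R)) (one : G → R) (x : R) : R :=
  ∑ g : G, α.act g (x * one (𝔾.inv g))

/-- `R` is an `α`-partial Galois extension of `R^α`: there is a partial Galois
coordinate system `x_i, y_i ∈ R` with
`∑_i x_i α_g(y_i 1_{g⁻¹}) = δ_{e,g} 1_e` for all `e ∈ G₀`, `g ∈ G`. -/
def IsPartialGalois {G : Type u} [Fintype G] [DecidableEq G] (𝔾 : AlgGroupoid G)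
    {R : Type u} [Ring R] (α : PartialGroupoidAction 𝔾 R (Set.univ : Set R))
    (one : G → R) : Prop :=
  ∃ (n : ℕ) (xs ys : Fin n → R), ∀ g : G,
    ∑ i, xs i * α.act g (ys i * one (𝔾.inv g)) = if 𝔾.isId g then one g else 0

namespace AlgGroupoid
variable {G : Type u} (𝔾 : AlgGroupoid G)

lemma isId_d (g : G) : 𝔾.isId (𝔾.d g) := 𝔾.d_d g
lemma isId_r (g : G) : 𝔾.isId (𝔾.r g) := 𝔾.d_r g

lemma inv_mul_cancel_left (h k : G) (hc : 𝔾.d h = 𝔾.r k) :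
    𝔾.mul (𝔾.inv h) (𝔾.mul h k) = k := by
  rw [← 𝔾.mul_assoc' _ _ _ (by rw [𝔾.d_inv]) hc, 𝔾.inv_mul, hc, 𝔾.r_mul]

lemma mul_inv_cancel_left (h k : G) (hc : 𝔾.r h = 𝔾.r k) :
    𝔾.mul h (𝔾.mul (𝔾.inv h) k) = k := by
  rw [← 𝔾.mul_assoc' _ _ _ (𝔾.r_inv h).symm (by rw [𝔾.d_inv, hc]), 𝔾.mul_inv, hc, 𝔾.r_mul]

lemma mul_r_self (g : G) : 𝔾.mul g (𝔾.r (𝔾.inv g)) = g := by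
  rw [𝔾.r_inv, 𝔾.mul_d]

lemma inv_mul' (g h : G) (hc : 𝔾.d g = 𝔾.r h) :
    𝔾.inv (𝔾.mul g h) = 𝔾.mul (𝔾.inv h) (𝔾.inv g) := by
  set a := 𝔾.mul g h with ha
  set v := 𝔾.mul (𝔾.inv h) (𝔾.inv g) with hv
  have hda : 𝔾.d a = 𝔾.d h := 𝔾.d_mul g h hc
  have hra : 𝔾.r a = 𝔾.r g := 𝔾.r_mul' g h hc
  have hchg : 𝔾.d (𝔾.inv h) = 𝔾.r (𝔾.inv g) := by rw [𝔾.d_inv, 𝔾.r_inv, hc]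
  have hdv : 𝔾.d v = 𝔾.r g := by rw [hv, 𝔾.d_mul _ _ hchg, 𝔾.d_inv]
  have hva : 𝔾.mul v a = 𝔾.d h := by
    have h1 : 𝔾.mul (𝔾.inv g) a = h := by
      rw [ha, ← 𝔾.mul_assoc' _ _ _ (by rw [𝔾.d_inv]) hc, 𝔾.inv_mul, hc, 𝔾.r_mul]
    have h2 : 𝔾.mul v a = 𝔾.mul (𝔾.inv h) (𝔾.mul (𝔾.inv g) a) := by
      rw [hv]
      exact 𝔾.mul_assoc' _ _ _ hchg (by rw [𝔾.d_inv, hra])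
    rw [h2, h1, 𝔾.inv_mul]
  symm
  rw [← 𝔾.mul_d v, hdv, ← hra, ← 𝔾.mul_inv a,
    ← 𝔾.mul_assoc' v a (𝔾.inv a) (by rw [hdv, hra]) (by rw [𝔾.r_inv]),
    hva, ← hda, ← 𝔾.r_inv a, 𝔾.r_mul]

end AlgGroupoid


section ActionLemmas
set_option linter.unusedSectionVars false

variable {G : Type u} {𝔾 : AlgGroupoid G} {R : Type u} [Ring R]
  {α : PartialGroupoidAction 𝔾 R (Set.univ : Set R)} {one : G → R}

variable (hone : ∀ g, IsIdentityElem (one g) (α.D g))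
variable (hcen : ∀ g (x : R), one g * x = x * one g)

include hone hcen

lemma one_mul_mem {g : G} {x : R} (hx : x ∈ α.D g) : one g * x = x :=
  ((hone g).2 x hx).1

lemma mul_one_mem {g : G} {x : R} (hx : x ∈ α.D g) : x * one g = x :=
  ((hone g).2 x hx).2

lemma memD (g : G) (x : R) : x * one g ∈ α.D g := by
  have h1 : x * one g ∈ α.D (𝔾.r g) :=
    (α.ideal_r g).mul_mem_left (Set.mem_univ x) ((α.ideal g).subset (hone g).1)
  have idm : one g * one g = one g := mul_one_mem hone hcen (hone g).1
  have h2 : x * one g = (x * one g) * one g := by rw [mul_assoc, idm]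
  rw [h2]
  exact (α.ideal g).mul_mem_left h1 (hone g).1

lemma memD' (g : G) (x : R) : one g * x ∈ α.D g := by
  rw [hcen]; exact memD hone hcen g x

lemma mem_mid (x : R) (a b : G) : x * one a * one b ∈ α.D a := by
  rw [mul_assoc, hcen a (one b), ← mul_assoc]
  exact memD hone hcen a (x * one b)

lemma mul_absorb {a : G} {w : R} (hw : w ∈ α.D a) (y z : R) :
    w * (y * one a * z) = w * (y * z) := by
  rw [show y * one a = one a * y from (hcen a y).symm, mul_assoc (one a), ← mul_assoc,
    mul_one_mem hone hcen hw]

lemma act_mem {g : G} {x : R} (hx : x ∈ α.D (𝔾.inv g)) : α.act g x ∈ α.D g :=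
  (α.bijOn g).mapsTo hx

lemma act_mem' {g : G} {x : R} (hx : x ∈ α.D g) : α.act (𝔾.inv g) x ∈ α.D (𝔾.inv g) :=
  (α.bijOn (𝔾.inv g)).mapsTo (by rwa [𝔾.inv_inv])

lemma act_act {g : G} {y : R} (hy : y ∈ α.D g) : α.act g (α.act (𝔾.inv g) y) = y := by
  have h := α.comp_cond g (𝔾.inv g) (𝔾.r_inv g).symm y (by rwa [𝔾.inv_inv]) (act_mem' hone hcen hy)
  rw [h, 𝔾.mul_inv, α.act_id _ (𝔾.isId_r g) y ((α.ideal g).subset hy)]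

lemma act_inv_act {g : G} {x : R} (hx : x ∈ α.D (𝔾.inv g)) :
    α.act (𝔾.inv g) (α.act g x) = x := by
  have h := act_act hone hcen (g := 𝔾.inv g) (y := x) hx
  rwa [𝔾.inv_inv] at h

lemma act_zero (g : G) : α.act g 0 = 0 := by
  have h0 : (0 : R) ∈ α.D (𝔾.inv g) := (α.ideal _).zero_mem
  have h := α.map_add g 0 h0 0 h0
  rw [add_zero] at h
  exact (left_eq_add.mp h)

lemma sum_memD {ι : Type*} {s : Finset ι} {f : ι → R} {g : G}
    (hf : ∀ i ∈ s, f i ∈ α.D g) : (∑ i ∈ s, f i) ∈ α.D g := by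
  classical
  induction s using Finset.induction_on with
  | empty => simpa using (α.ideal g).zero_mem
  | insert _ _ hnotmem ih =>
    rw [Finset.sum_insert hnotmem]
    exact (α.ideal g).add_mem (hf _ (Finset.mem_insert_self _ _))
      (ih fun i hi => hf i (Finset.mem_insert_of_mem hi))

lemma act_sum {ι : Type*} {s : Finset ι} {f : ι → R} {g : G}
    (hf : ∀ i ∈ s, f i ∈ α.D (𝔾.inv g)) :
    α.act g (∑ i ∈ s, f i) = ∑ i ∈ s, α.act g (f i) := by
  classical
  induction s using Finset.induction_on with
  | empty => simpa using act_zero hone hcen g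
  | insert _ _ hnotmem ih =>
    rw [Finset.sum_insert hnotmem, Finset.sum_insert hnotmem,
      α.map_add g _ (hf _ (Finset.mem_insert_self _ _))
        _ (sum_memD hone hcen fun i hi => hf i (Finset.mem_insert_of_mem hi)),
      ih fun i hi => hf i (Finset.mem_insert_of_mem hi)]

lemma act_one (g : G) : α.act g (one (𝔾.inv g)) = one g := by
  have hu : α.act g (one (𝔾.inv g)) ∈ α.D g := act_mem hone hcen (hone (𝔾.inv g)).1
  have key : α.act g (one (𝔾.inv g)) * one g = one g := by
    conv_lhs => rw [← act_act hone hcen (hone g).1]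
    rw [← α.map_mul g _ (hone _).1 _ (act_mem' hone hcen (hone g).1),
      one_mul_mem hone hcen (act_mem' hone hcen (hone g).1), act_act hone hcen (hone g).1]
  rw [← mul_one_mem hone hcen hu, key]

lemma act_mem_mul {m n : G} (hc : 𝔾.d m = 𝔾.r n) {y : R}
    (h1 : y ∈ α.D (𝔾.inv m)) (h2 : y ∈ α.D n) :
    α.act m y ∈ α.D (𝔾.mul m n) := by
  have hcc : 𝔾.d (𝔾.inv n) = 𝔾.r (𝔾.inv m) := by rw [𝔾.d_inv, 𝔾.r_inv, hc]
  have hx1 : α.act m y ∈ α.D (𝔾.inv (𝔾.inv m)) := by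
    rw [𝔾.inv_inv]; exact act_mem hone hcen h1
  have hx2 : α.act (𝔾.inv m) (α.act m y) ∈ α.D (𝔾.inv (𝔾.inv n)) := by
    rw [𝔾.inv_inv, act_inv_act hone hcen h1]; exact h2
  have h := α.dom_cond (𝔾.inv n) (𝔾.inv m) hcc (α.act m y) hx1 hx2
  rwa [𝔾.inv_mul' _ _ hcc, 𝔾.inv_inv, 𝔾.inv_inv] at h

lemma orth (ho : ∀ e f, 𝔾.isId e → 𝔾.isId f → e ≠ f → ∀ x ∈ α.D e, ∀ y ∈ α.D f, x * y = 0)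
    {g h : G} (hne : 𝔾.r g ≠ 𝔾.r h) {x y : R} (hx : x ∈ α.D g) (hy : y ∈ α.D h) :
    x * y = 0 :=
  ho _ _ (𝔾.isId_r g) (𝔾.isId_r h) hne x ((α.ideal g).subset hx) y ((α.ideal h).subset hy)

lemma act_one_mul_one {g n : G} (hc : 𝔾.r g = 𝔾.r n) :
    α.act (𝔾.inv g) (one g * one n) = one (𝔾.inv g) * one (𝔾.mul (𝔾.inv g) n) := by
  have hSg : one g * one n ∈ α.D g := memD' hone hcen g (one n)
  have hSn : one g * one n ∈ α.D n := memD hone hcen n (one g)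
  have hcc : 𝔾.d (𝔾.inv g) = 𝔾.r n := by rw [𝔾.d_inv, hc]
  set u := α.act (𝔾.inv g) (one g * one n) with hu
  have hug : u ∈ α.D (𝔾.inv g) := act_mem' hone hcen hSg
  have hum : u ∈ α.D (𝔾.mul (𝔾.inv g) n) :=
    act_mem_mul hone hcen hcc (by rwa [𝔾.inv_inv]) hSn
  set v := one (𝔾.inv g) * one (𝔾.mul (𝔾.inv g) n) with hv
  have hvg : v ∈ α.D (𝔾.inv g) := memD' hone hcen _ _
  have hvm : v ∈ α.D (𝔾.mul (𝔾.inv g) n) := memD hone hcen _ _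
  have huv2 : u * v = u := by
    rw [hv, ← mul_assoc, mul_one_mem hone hcen hug, mul_one_mem hone hcen hum]
  have hgvn : α.act g v ∈ α.D n := by
    have hcond : 𝔾.d g = 𝔾.r (𝔾.mul (𝔾.inv g) n) := by
      rw [𝔾.r_mul' _ _ hcc, 𝔾.r_inv]
    have h := act_mem_mul hone hcen hcond hvg hvm
    rwa [𝔾.mul_inv_cancel_left g n hc] at h
  have hgvg : α.act g v ∈ α.D g := act_mem hone hcen hvg
  have hS' : one g * one n ∈ α.D (𝔾.inv (𝔾.inv g)) := by rwa [𝔾.inv_inv]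
  have hgv' : α.act g v ∈ α.D (𝔾.inv (𝔾.inv g)) := by rwa [𝔾.inv_inv]
  have e1 : α.act (𝔾.inv g) ((one g * one n) * α.act g v) = u * v := by
    rw [α.map_mul (𝔾.inv g) _ hS' _ hgv', act_inv_act hone hcen hvg]
  have e2 : (one g * one n) * α.act g v = α.act g v := by
    rw [mul_assoc, one_mul_mem hone hcen hgvn, one_mul_mem hone hcen hgvg]
  have huv1 : u * v = v := by
    rw [← e1, e2, act_inv_act hone hcen hvg]
  rw [← huv2, huv1]

lemma mem_mul_one {g n : G} (hc : 𝔾.r g = 𝔾.r n) {p : R} (hp : p ∈ α.D g) :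
    p * one n = α.act g (α.act (𝔾.inv g) p * one (𝔾.mul (𝔾.inv g) n)) := by
  have hS : one g * one n ∈ α.D g := memD' hone hcen g (one n)
  have h1 : p * one n = p * (one g * one n) := by
    rw [← mul_assoc, mul_one_mem hone hcen hp]
  rw [h1]
  conv_lhs => rw [← act_act hone hcen hp, ← act_act hone hcen hS]
  rw [← α.map_mul g _ (act_mem' hone hcen hp) _ (act_mem' hone hcen hS),
    act_one_mul_one hone hcen hc, ← mul_assoc,
    mul_one_mem hone hcen (act_mem' hone hcen hp)]

lemma act_mul_right {g : G} {w : R} (hw : w ∈ α.D (𝔾.inv g)) (z : R) :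
    α.act g w * z = α.act g (w * α.act (𝔾.inv g) (z * one g)) := by
  have h1 : α.act g w * z = α.act g w * (z * one g) := by
    conv_lhs => rw [← mul_one_mem hone hcen (act_mem hone hcen hw)]
    rw [mul_assoc, hcen g z]
  rw [h1]
  conv_lhs => rw [← act_act hone hcen (memD hone hcen g z)]
  rw [← α.map_mul g w hw _ (act_mem' hone hcen (memD hone hcen g z))]

end ActionLemmas


section TraceLemmas
set_option linter.unusedSectionVars false

variable {G : Type u} [Fintype G] [DecidableEq G] {𝔾 : AlgGroupoid G} {R : Type u} [Ring R]
  {α : PartialGroupoidAction 𝔾 R (Set.univ : Set R)} {one : G → R}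

variable (hone : ∀ g, IsIdentityElem (one g) (α.D g))
variable (hcen : ∀ g (x : R), one g * x = x * one g)
variable (ho : ∀ e f, 𝔾.isId e → 𝔾.isId f → e ≠ f → ∀ x ∈ α.D e, ∀ y ∈ α.D f, x * y = 0)

include hone hcen ho

lemma trace_mul_one (z : R) (n : G) :
    traceMap 𝔾 α one z * one n =
      ∑ k ∈ Finset.univ.filter (fun k => 𝔾.r k = 𝔾.r n),
        α.act k (z * one (𝔾.inv k) * one (𝔾.mul (𝔾.inv k) n)) := by
  rw [traceMap, Finset.sum_mul, Finset.sum_filter]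
  refine Finset.sum_congr rfl fun k _ => ?_
  by_cases hk : 𝔾.r k = 𝔾.r n
  · rw [if_pos hk, mem_mul_one hone hcen hk (act_mem hone hcen (memD hone hcen _ z)),
      act_inv_act hone hcen (memD hone hcen _ z)]
  · rw [if_neg hk]
    exact orth hone hcen ho hk (act_mem hone hcen (memD hone hcen _ z)) (hone n).1

lemma act_trace_summand_mem (z : R) {h g : G} (hg : 𝔾.r g = 𝔾.d h) :
    α.act g (z * one (𝔾.inv g) * one (𝔾.mul (𝔾.inv g) (𝔾.inv h))) ∈ α.D (𝔾.inv h) := by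
  have hcomp : 𝔾.d g = 𝔾.r (𝔾.mul (𝔾.inv g) (𝔾.inv h)) := by
    rw [𝔾.r_mul' _ _ (by rw [𝔾.d_inv, 𝔾.r_inv, hg]), 𝔾.r_inv]
  have harg1 : z * one (𝔾.inv g) * one (𝔾.mul (𝔾.inv g) (𝔾.inv h)) ∈ α.D (𝔾.inv g) :=
    mem_mid hone hcen z _ _
  have harg2 : z * one (𝔾.inv g) * one (𝔾.mul (𝔾.inv g) (𝔾.inv h)) ∈
      α.D (𝔾.mul (𝔾.inv g) (𝔾.inv h)) := memD hone hcen _ _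
  have hmem := act_mem_mul hone hcen hcomp harg1 harg2
  rwa [𝔾.mul_inv_cancel_left g (𝔾.inv h) (by rw [𝔾.r_inv, hg])] at hmem

lemma act_trace (z : R) (h : G) :
    α.act h (traceMap 𝔾 α one z * one (𝔾.inv h)) =
      ∑ g ∈ Finset.univ.filter (fun g => 𝔾.r g = 𝔾.d h),
        α.act (𝔾.mul h g) (z * one (𝔾.inv g) * one (𝔾.mul (𝔾.inv g) (𝔾.inv h))) := by
  have hfil : (Finset.univ.filter (fun k => 𝔾.r k = 𝔾.r (𝔾.inv h)))
      = Finset.univ.filter (fun k => 𝔾.r k = 𝔾.d h) := by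
    apply Finset.filter_congr
    intro k _
    rw [𝔾.r_inv]
  rw [trace_mul_one hone hcen ho z (𝔾.inv h), hfil,
    act_sum hone hcen (fun g hg => act_trace_summand_mem hone hcen ho z
      (Finset.mem_filter.mp hg).2)]
  refine Finset.sum_congr rfl fun g hg => ?_
  have hg' : 𝔾.r g = 𝔾.d h := (Finset.mem_filter.mp hg).2
  exact α.comp_cond h g hg'.symm _ (mem_mid hone hcen z _ _)
    (act_trace_summand_mem hone hcen ho z hg')

lemma trace_mem_invariants (z : R) :
    traceMap 𝔾 α one z ∈ invariants 𝔾 α one := by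
  simp only [invariants, Set.mem_setOf_eq]
  intro h
  rw [act_trace hone hcen ho z h, trace_mul_one hone hcen ho z h]
  refine Finset.sum_bij' (fun g _ => 𝔾.mul h g) (fun k _ => 𝔾.mul (𝔾.inv h) k)
    ?_ ?_ ?_ ?_ ?_
  · intro g hg
    have hg' : 𝔾.r g = 𝔾.d h := (Finset.mem_filter.mp hg).2
    simp only [Finset.mem_filter, Finset.mem_univ, true_and]
    exact 𝔾.r_mul' h g hg'.symm
  · intro k hk
    have hk' : 𝔾.r k = 𝔾.r h := (Finset.mem_filter.mp hk).2
    simp only [Finset.mem_filter, Finset.mem_univ, true_and]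
    rw [𝔾.r_mul' _ _ (by rw [𝔾.d_inv, hk']), 𝔾.r_inv]
  · intro g hg
    exact 𝔾.inv_mul_cancel_left h g (Finset.mem_filter.mp hg).2.symm
  · intro k hk
    exact 𝔾.mul_inv_cancel_left h k (Finset.mem_filter.mp hk).2.symm
  · intro g hg
    have hg' : 𝔾.r g = 𝔾.d h := (Finset.mem_filter.mp hg).2
    have hinv : 𝔾.inv (𝔾.mul h g) = 𝔾.mul (𝔾.inv g) (𝔾.inv h) := 𝔾.inv_mul' h g hg'.symm
    have hmix : 𝔾.mul (𝔾.inv (𝔾.mul h g)) h = 𝔾.inv g := by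
      rw [hinv, 𝔾.mul_assoc' _ _ _ (by rw [𝔾.d_inv, 𝔾.r_inv, hg']) (by rw [𝔾.d_inv]),
        𝔾.inv_mul, ← hg', ← 𝔾.d_inv g, 𝔾.mul_d]
    rw [hmix, hinv, mul_assoc, hcen (𝔾.inv g), ← mul_assoc]

lemma tau_balanced (g : G) {a : R} (ha : a ∈ α.D g) (x y : R) :
    traceMap 𝔾 α one (α.act (𝔾.inv g) (x * a) * y) =
      traceMap 𝔾 α one (x * (a * α.act g (y * one (𝔾.inv g)))) := by
  have hxa : x * a ∈ α.D g := by
    have h' := memD hone hcen g (x * a)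
    rwa [mul_assoc, mul_one_mem hone hcen ha] at h'
  set q := α.act g (y * one (𝔾.inv g)) with hq
  have hqg : q ∈ α.D g := act_mem hone hcen (memD hone hcen _ y)
  have haq : a * q ∈ α.D g := (α.ideal g).mul_mem_right ha ((α.ideal g).subset hqg)
  have hxaq : x * (a * q) ∈ α.D g := by
    have h' := memD hone hcen g (x * (a * q))
    rwa [mul_assoc, mul_one_mem hone hcen haq] at h'
  set w := α.act (𝔾.inv g) (x * a) with hw
  have hwg : w ∈ α.D (𝔾.inv g) := act_mem' hone hcen hxa
  have hL : ∀ l : G, α.act l (w * y * one (𝔾.inv l)) =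
      if 𝔾.d l = 𝔾.d g then
        α.act (𝔾.mul l (𝔾.inv g))
          (x * a * α.act g (y * one (𝔾.inv g) * one (𝔾.inv l)))
      else 0 := by
    intro l
    by_cases hl : 𝔾.d l = 𝔾.d g
    · rw [if_pos hl]
      have hv'g : y * one (𝔾.inv g) * one (𝔾.inv l) ∈ α.D (𝔾.inv g) :=
        mem_mid hone hcen y _ _
      have hstep1 : w * y * one (𝔾.inv l) = w * (y * one (𝔾.inv g) * one (𝔾.inv l)) := by
        rw [mul_assoc]
        exact (mul_absorb hone hcen hwg y (one (𝔾.inv l))).symm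
      have hgv : α.act g (y * one (𝔾.inv g) * one (𝔾.inv l)) ∈ α.D g :=
        act_mem hone hcen hv'g
      have hu' : x * a * α.act g (y * one (𝔾.inv g) * one (𝔾.inv l)) ∈ α.D g :=
        (α.ideal g).mul_mem_right hxa ((α.ideal g).subset hgv)
      have hstep2 : α.act (𝔾.inv g)
            (x * a * α.act g (y * one (𝔾.inv g) * one (𝔾.inv l)))
          = w * (y * one (𝔾.inv g) * one (𝔾.inv l)) := by
        rw [α.map_mul (𝔾.inv g) (x * a) (by rwa [𝔾.inv_inv]) _
            (by rw [𝔾.inv_inv]; exact hgv),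
          act_inv_act hone hcen hv'g, ← hw]
      have hactmem : α.act (𝔾.inv g)
            (x * a * α.act g (y * one (𝔾.inv g) * one (𝔾.inv l))) ∈ α.D (𝔾.inv l) := by
        rw [hstep2, ← hstep1]
        exact memD hone hcen _ (w * y)
      calc α.act l (w * y * one (𝔾.inv l))
          = α.act l (α.act (𝔾.inv g)
              (x * a * α.act g (y * one (𝔾.inv g) * one (𝔾.inv l)))) := by
            rw [hstep2, ← hstep1]
        _ = α.act (𝔾.mul l (𝔾.inv g))
              (x * a * α.act g (y * one (𝔾.inv g) * one (𝔾.inv l))) :=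
            α.comp_cond l (𝔾.inv g) (by rw [𝔾.r_inv, hl]) _
              (by rw [𝔾.inv_inv]; exact hu') hactmem
    · rw [if_neg hl, mul_assoc,
        orth hone hcen ho (g := 𝔾.inv g) (h := 𝔾.inv l)
          (by rw [𝔾.r_inv, 𝔾.r_inv]; exact fun hh => hl hh.symm)
          hwg (memD hone hcen _ y)]
      exact act_zero hone hcen l
  have hRn : ∀ m : G, ¬(𝔾.d m = 𝔾.r g) →
      α.act m (x * (a * q) * one (𝔾.inv m)) = 0 := by
    intro m hm
    rw [orth hone hcen ho (g := g) (h := 𝔾.inv m)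
        (by rw [𝔾.r_inv]; exact fun hh => hm hh.symm) hxaq (hone (𝔾.inv m)).1]
    exact act_zero hone hcen m
  rw [traceMap, traceMap]
  calc ∑ l : G, α.act l (w * y * one (𝔾.inv l))
      = ∑ l : G, if 𝔾.d l = 𝔾.d g then
          α.act (𝔾.mul l (𝔾.inv g))
            (x * a * α.act g (y * one (𝔾.inv g) * one (𝔾.inv l)))
        else 0 := Finset.sum_congr rfl fun l _ => hL l
    _ = ∑ l ∈ Finset.univ.filter (fun l => 𝔾.d l = 𝔾.d g),
          α.act (𝔾.mul l (𝔾.inv g))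
            (x * a * α.act g (y * one (𝔾.inv g) * one (𝔾.inv l))) :=
        (Finset.sum_filter _ _).symm
    _ = ∑ m ∈ Finset.univ.filter (fun m => 𝔾.d m = 𝔾.r g),
          α.act m (x * (a * q) * one (𝔾.inv m)) := ?_
    _ = ∑ m : G, if 𝔾.d m = 𝔾.r g then α.act m (x * (a * q) * one (𝔾.inv m)) else 0 :=
        Finset.sum_filter _ _
    _ = ∑ m : G, α.act m (x * (a * q) * one (𝔾.inv m)) := by
        refine Finset.sum_congr rfl fun m _ => ?_
        by_cases hm : 𝔾.d m = 𝔾.r g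
        · rw [if_pos hm]
        · rw [if_neg hm, hRn m hm]
  refine Finset.sum_bij' (fun l _ => 𝔾.mul l (𝔾.inv g)) (fun m _ => 𝔾.mul m g)
    ?_ ?_ ?_ ?_ ?_
  · intro l hl
    have hl' : 𝔾.d l = 𝔾.d g := (Finset.mem_filter.mp hl).2
    simp only [Finset.mem_filter, Finset.mem_univ, true_and]
    rw [𝔾.d_mul l (𝔾.inv g) (by rw [𝔾.r_inv, hl']), 𝔾.d_inv]
  · intro m hm
    have hm' : 𝔾.d m = 𝔾.r g := (Finset.mem_filter.mp hm).2
    simp only [Finset.mem_filter, Finset.mem_univ, true_and]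
    rw [𝔾.d_mul m g hm']
  · intro l hl
    have hl' : 𝔾.d l = 𝔾.d g := (Finset.mem_filter.mp hl).2
    show 𝔾.mul (𝔾.mul l (𝔾.inv g)) g = l
    rw [𝔾.mul_assoc' l (𝔾.inv g) g (by rw [𝔾.r_inv, hl']) (by rw [𝔾.d_inv]),
      𝔾.inv_mul, ← hl', 𝔾.mul_d]
  · intro m hm
    have hm' : 𝔾.d m = 𝔾.r g := (Finset.mem_filter.mp hm).2
    show 𝔾.mul (𝔾.mul m g) (𝔾.inv g) = m
    rw [𝔾.mul_assoc' m g (𝔾.inv g) hm' (by rw [𝔾.r_inv]),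
      𝔾.mul_inv, ← hm', 𝔾.mul_d]
  · intro l hl
    have hl' : 𝔾.d l = 𝔾.d g := (Finset.mem_filter.mp hl).2
    show α.act (𝔾.mul l (𝔾.inv g)) (x * a * α.act g (y * one (𝔾.inv g) * one (𝔾.inv l)))
        = α.act (𝔾.mul l (𝔾.inv g)) (x * (a * q) * one (𝔾.inv (𝔾.mul l (𝔾.inv g))))
    have hinv : 𝔾.inv (𝔾.mul l (𝔾.inv g)) = 𝔾.mul g (𝔾.inv l) := by
      rw [𝔾.inv_mul' l (𝔾.inv g) (by rw [𝔾.r_inv, hl']), 𝔾.inv_inv]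
    have hcq : 𝔾.r g = 𝔾.r (𝔾.mul g (𝔾.inv l)) :=
      (𝔾.r_mul' g (𝔾.inv l) (by rw [𝔾.r_inv, hl'])).symm
    have hkey : q * one (𝔾.mul g (𝔾.inv l))
        = α.act g (y * one (𝔾.inv g) * one (𝔾.inv l)) := by
      have hmm := mem_mul_one hone hcen hcq hqg
      rw [hq, act_inv_act hone hcen (memD hone hcen _ y), ← hq,
        𝔾.inv_mul_cancel_left g (𝔾.inv l) (by rw [𝔾.r_inv, hl'])] at hmm
      exact hmm
    rw [hinv, mul_assoc x (a * q), mul_assoc a q, hkey, ← mul_assoc x a]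

lemma inv_balanced {r : R} (hr : r ∈ invariants 𝔾 α one) (x y : R) (g : G) :
    (x * r) * α.act g (y * one (𝔾.inv g)) = x * α.act g ((r * y) * one (𝔾.inv g)) := by
  have hr' : α.act g (r * one (𝔾.inv g)) = r * one g := hr g
  have e1 : (r * one (𝔾.inv g)) * (y * one (𝔾.inv g)) = (r * y) * one (𝔾.inv g) := by
    rw [mul_assoc r, one_mul_mem hone hcen (memD hone hcen _ y), ← mul_assoc]
  rw [← e1, α.map_mul g _ (memD hone hcen _ r) _ (memD hone hcen _ y), hr',
    mul_assoc r (one g), one_mul_mem hone hcen (act_mem hone hcen (memD hone hcen _ y)),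
    ← mul_assoc]

lemma tau'_left (x y z : R) :
    (∑ g : G, (x * α.act g (y * one (𝔾.inv g))) * α.act g (z * one (𝔾.inv g)))
      = x * traceMap 𝔾 α one (y * z) := by
  rw [traceMap, Finset.mul_sum]
  refine Finset.sum_congr rfl fun g _ => ?_
  have e1 : (y * one (𝔾.inv g)) * (z * one (𝔾.inv g)) = (y * z) * one (𝔾.inv g) := by
    rw [mul_assoc y, one_mul_mem hone hcen (memD hone hcen _ z), ← mul_assoc]
  rw [mul_assoc, ← α.map_mul g _ (memD hone hcen _ y) _ (memD hone hcen _ z), e1]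

lemma tau'_right (x y z : R) :
    traceMap 𝔾 α one (x * y) * z
      = ∑ g : G, α.act (𝔾.inv g) (x * (y * α.act g (z * one (𝔾.inv g)))) := by
  rw [traceMap, Finset.sum_mul]
  have hterm : ∀ g : G, α.act g (x * y * one (𝔾.inv g)) * z
      = α.act g (x * (y * α.act (𝔾.inv g) (z * one g))) := by
    intro g
    rw [act_mul_right hone hcen (memD hone hcen _ (x * y)) z]
    congr 1
    have hu : α.act (𝔾.inv g) (z * one g) ∈ α.D (𝔾.inv g) :=
      act_mem' hone hcen (memD hone hcen _ z)
    rw [mul_assoc (x * y), one_mul_mem hone hcen hu, mul_assoc]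
  rw [Finset.sum_congr rfl fun g _ => hterm g]
  exact Fintype.sum_equiv ⟨𝔾.inv, 𝔾.inv, 𝔾.inv_inv, 𝔾.inv_inv⟩ _ _ (fun g => by
    simp only [Equiv.coe_fn_mk, 𝔾.inv_inv])

lemma one_mem_invariants : (1 : R) ∈ invariants 𝔾 α one := by
  simp only [invariants, Set.mem_setOf_eq]
  intro g
  rw [one_mul, one_mul, act_one hone hcen g]

lemma trace_mul_invariant {r : R} (hr : r ∈ invariants 𝔾 α one) (x : R) :
    traceMap 𝔾 α one (x * r) = traceMap 𝔾 α one x * r := by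
  rw [traceMap, traceMap, Finset.sum_mul]
  refine Finset.sum_congr rfl fun g _ => ?_
  have e1 : (x * one (𝔾.inv g)) * (r * one (𝔾.inv g)) = x * r * one (𝔾.inv g) := by
    rw [mul_assoc x, one_mul_mem hone hcen (memD hone hcen _ r), ← mul_assoc]
  rw [← e1, α.map_mul g _ (memD hone hcen _ x) _ (memD hone hcen _ r), hr g,
    ← hcen g r, ← mul_assoc,
    mul_one_mem hone hcen (act_mem hone hcen (memD hone hcen _ x))]

end TraceLemmas


/-- **Proposition 4.4**: under the standing hypotheses, the six-tuple
`(R⋆_αG, R^α, R, R, τ, τ')` is a Morita context (expressed here on elements: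
`τ(x ⊗ y) = t_α(xy)` lands in `R^α`, `τ` is `R⋆_αG`-balanced, `τ'` is
`R^α`-balanced, and the two Morita compatibility identities hold); moreover
`τ` is surjective if and only if there exists `x ∈ R` with `t_α(x) = 1_R`. -/
theorem morita_context_skew_invariants {G : Type u} [Nonempty G] [Fintype G]
    [DecidableEq G] (𝔾 : AlgGroupoid G) {R : Type u} [Ring R]
    (α : PartialGroupoidAction 𝔾 R (Set.univ : Set R))
    (one : G → R) (hone : ∀ g, IsIdentityElem (one g) (α.D g))
    (hcentral : ∀ g (x : R), one g * x = x * one g)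
    (horth : ∀ e f, 𝔾.isId e → 𝔾.isId f → e ≠ f → ∀ x ∈ α.D e, ∀ y ∈ α.D f, x * y = 0)
    (hunit : (1 : R) = ∑ e ∈ Finset.univ.filter (fun e => 𝔾.isId e), one e) :
    (∀ x y : R, traceMap 𝔾 α one (x * y) ∈ invariants 𝔾 α one) ∧
    (∀ g : G, ∀ a ∈ α.D g, ∀ x y : R,
      traceMap 𝔾 α one (α.act (𝔾.inv g) (x * a) * y) =
        traceMap 𝔾 α one (x * (a * α.act g (y * one (𝔾.inv g))))) ∧
    (∀ r ∈ invariants 𝔾 α one, ∀ x y : R, ∀ g : G,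
      (x * r) * α.act g (y * one (𝔾.inv g)) = x * α.act g ((r * y) * one (𝔾.inv g))) ∧
    (∀ x y z : R,
      (∑ g : G, (x * α.act g (y * one (𝔾.inv g))) * α.act g (z * one (𝔾.inv g)))
        = x * traceMap 𝔾 α one (y * z)) ∧
    (∀ x y z : R,
      traceMap 𝔾 α one (x * y) * z
        = ∑ g : G, α.act (𝔾.inv g) (x * (y * α.act g (z * one (𝔾.inv g))))) ∧
    ((∀ r ∈ invariants 𝔾 α one, ∃ x : R, traceMap 𝔾 α one x = r) ↔
      ∃ x : R, traceMap 𝔾 α one x = 1) := by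
  refine ⟨fun x y => trace_mem_invariants hone hcentral horth (x * y),
    fun g a ha x y => tau_balanced hone hcentral horth g ha x y,
    fun r hr x y g => inv_balanced hone hcentral horth hr x y g,
    fun x y z => tau'_left hone hcentral horth x y z,
    fun x y z => tau'_right hone hcentral horth x y z,
    fun hsurj => hsurj 1 (one_mem_invariants hone hcentral horth),
    fun ⟨x₀, hx₀⟩ r hr => ⟨x₀ * r, by
      rw [trace_mul_invariant hone hcentral horth hr x₀, hx₀, one_mul]⟩⟩
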